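/- Let M be a 3-connected matroid and let Q ⊆ E(M) be a quad (a 4-element set that is both a circuit and a cocircuit). If e ∈ Q is not contained in any triad of M, then M\e is 3-connected. -/

import Mathlib

open Matroid Set

namespace DetPairs

variable {α : Type*}

/-- The rank of a set in a matroid: the maximum size of an independent subset
(as an integer, for convenient arithmetic). -/
noncomputable def r (M : Matroid α) (X : Set α) : ℤ :=
  ((sSup (Set.ncard '' {I | M.Indep I ∧ I ⊆ X}) : ℕ) : ℤ)

/-- The connectivity function `λ_M(X) = r(X) + r(E − X) − r(M)`. -/
noncomputable def lam (M : Matroid α) (X : Set α) : ℤ :=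
  r M X + r M (M.E \ X) - r M M.E

/-- Local connectivity `⊓(X,Y) = r(X) + r(Y) − r(X ∪ Y)`. -/
noncomputable def localConn (M : Matroid α) (X Y : Set α) : ℤ :=
  r M X + r M Y - r M (X ∪ Y)

/-- A circuit: a minimal dependent set. -/
def Circuit (M : Matroid α) (C : Set α) : Prop :=
  C ⊆ M.E ∧ ¬ M.Indep C ∧ ∀ D, D ⊂ C → M.Indep D

/-- A cocircuit: a circuit of the dual. -/
def Cocircuit (M : Matroid α) (C : Set α) : Prop := Circuit M✶ C

/-- A triangle: a 3-element circuit. -/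
def Triangle (M : Matroid α) (T : Set α) : Prop := Circuit M T ∧ T.ncard = 3

/-- A triad: a 3-element cocircuit. -/
def Triad (M : Matroid α) (T : Set α) : Prop := Cocircuit M T ∧ T.ncard = 3

/-- A quad: a 4-element set that is both a circuit and a cocircuit. -/
def Quad (M : Matroid α) (Q : Set α) : Prop :=
  Circuit M Q ∧ Cocircuit M Q ∧ Q.ncard = 4

/-- Deletion of a set of elements. -/
def Del (M : Matroid α) (D : Set α) : Matroid α := M ↾ (M.E \ D)

/-- Contraction of a set of elements. -/
def Con (M : Matroid α) (C : Set α) : Matroid α := (M✶ ↾ (M.E \ C))✶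

/-- `M` is 3-connected: it has no `k`-separation for `k = 1, 2`, where a
`k`-separation is a set `X` with `λ(X) = k − 1`, `|X| ≥ k` and `|E − X| ≥ k`. -/
def ThreeConnected (M : Matroid α) : Prop :=
  ∀ k : ℕ, 0 < k → k < 3 → ∀ X ⊆ M.E,
    ¬ (lam M X = (k : ℤ) - 1 ∧ (k : ℤ) ≤ X.ncard ∧ (k : ℤ) ≤ (M.E \ X).ncard)

/-- A detachable pair: distinct elements `e, f` such that `M \ e \ f` or
`M / e / f` is 3-connected. -/
def DetachablePair (M : Matroid α) (e f : α) : Prop :=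
  e ≠ f ∧ e ∈ M.E ∧ f ∈ M.E ∧
    (ThreeConnected (Del M {e, f}) ∨ ThreeConnected (Con M {e, f}))

/-- The triple of elements with indices `i, i+1, i+2` in an ordering. -/
def tri (e : ℕ → α) (i : ℕ) : Set α := {e i, e (i + 1), e (i + 2)}

/-- `(e 0, …, e (n-1))` is a fan ordering of length `n ≥ 3` in `M`:
consecutive triples alternate between triangles and triads. -/
def FanOrd (M : Matroid α) (n : ℕ) (e : ℕ → α) : Prop :=
  3 ≤ n ∧ Set.InjOn e (Set.Iio n) ∧ (∀ i < n, e i ∈ M.E) ∧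
    (Triangle M (tri e 0) ∨ Triad M (tri e 0)) ∧
    ∀ i, i + 3 < n →
      (Triangle M (tri e i) → Triad M (tri e (i + 1))) ∧
      (Triad M (tri e i) → Triangle M (tri e (i + 1)))

/-- A fan (as a set): either a 2-element subset of the ground set, or the
underlying set of a fan ordering of length at least 3. -/
def IsFan (M : Matroid α) (F : Set α) : Prop :=
  (F ⊆ M.E ∧ F.ncard = 2) ∨ ∃ n e, FanOrd M n e ∧ F = e '' Set.Iio n

/-- A maximal fan: a fan contained in no strictly larger fan. -/
def MaximalFan (M : Matroid α) (F : Set α) : Prop :=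
  IsFan M F ∧ ∀ F', IsFan M F' → F ⊆ F' → F' = F

/-- `M` is a wheel or a whirl: its ground set has a cyclic ordering of even size
`2n` in which consecutive triples alternate between triangles and triads. -/
def IsWheelOrWhirl (M : Matroid α) : Prop :=
  ∃ (n : ℕ) (e : ℕ → α), 2 ≤ n ∧ Set.InjOn e (Set.Iio (2 * n)) ∧
    M.E = e '' Set.Iio (2 * n) ∧
    ∀ i < 2 * n,
      (i % 2 = 0 → Triangle M {e i, e ((i + 1) % (2 * n)), e ((i + 2) % (2 * n))}) ∧
      (i % 2 = 1 → Triad M {e i, e ((i + 1) % (2 * n)), e ((i + 2) % (2 * n))})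

/-- An `M(K₄)`-separator: a 6-element set `{a,b,c,x,y,z}` where `{x,y,z}` is a
triad and `{a,b,c}`, `{a,x,y}`, `{b,x,z}`, `{c,y,z}` are triangles. -/
def MK4Sep (M : Matroid α) (S : Set α) : Prop :=
  ∃ a b c x y z : α, S = {a, b, c, x, y, z} ∧ S.ncard = 6 ∧
    Triad M {x, y, z} ∧ Triangle M {a, b, c} ∧ Triangle M {a, x, y} ∧
    Triangle M {b, x, z} ∧ Triangle M {c, y, z}

/-- A vertical 3-separation `(X, {e}, Y)` of `M`. -/
def VertThreeSep (M : Matroid α) (X : Set α) (e : α) (Y : Set α) : Prop :=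
  X ∪ {e} ∪ Y = M.E ∧ Disjoint X Y ∧ e ∉ X ∧ e ∉ Y ∧
    lam M X = 2 ∧ lam M Y = 2 ∧ e ∈ M.closure X ∧ e ∈ M.closure Y ∧
    3 ≤ r M X ∧ 3 ≤ r M Y

/-- `N` is a simplification of `M`: a restriction of `M` to a set of
representatives, one from each parallel class of nonloops. -/
def SimplificationOf (M N : Matroid α) : Prop :=
  ∃ X : Set α, (∀ x ∈ X, x ∈ M.E ∧ x ∉ M.closure ∅) ∧ N = M ↾ X ∧
    ∀ y ∈ M.E, y ∉ M.closure ∅ →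
      ∃! x, x ∈ X ∧ M.closure {y} = M.closure {x}
section Rank

variable {M : Matroid α} {I J B X Y Z S C D : Set α} {x q : α}

lemma r_set_nonempty (M : Matroid α) (X : Set α) :
    (Set.ncard '' {I | M.Indep I ∧ I ⊆ X}).Nonempty :=
  ⟨0, ⟨∅, ⟨M.empty_indep, empty_subset X⟩, by simp⟩⟩

lemma r_set_bdd (M : Matroid α) [M.Finite] (X : Set α) :
    BddAbove (Set.ncard '' {I | M.Indep I ∧ I ⊆ X}) := by
  refine ⟨M.E.ncard, ?_⟩
  rintro n ⟨I, ⟨hI, -⟩, rfl⟩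
  exact ncard_le_ncard hI.subset_ground M.ground_finite

lemma le_r [M.Finite] (hI : M.Indep I) (hIX : I ⊆ X) : (I.ncard : ℤ) ≤ r M X := by
  have : I.ncard ≤ sSup (Set.ncard '' {I | M.Indep I ∧ I ⊆ X}) :=
    le_csSup (r_set_bdd M X) ⟨I, ⟨hI, hIX⟩, rfl⟩
  unfold r
  exact_mod_cast this

lemma r_eq_of_basis' [M.Finite] (hI : M.IsBasis' I X) : r M X = (I.ncard : ℤ) := by
  have hub : ∀ n ∈ Set.ncard '' {I | M.Indep I ∧ I ⊆ X}, n ≤ I.ncard := by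
    rintro n ⟨J, ⟨hJ, hJX⟩, rfl⟩
    have hJ' : (M ↾ X).Indep J := restrict_indep_iff.2 ⟨hJ, hJX⟩
    obtain ⟨B, hB, hJB⟩ := hJ'.exists_isBase_superset
    have hBfin : B.Finite :=
      M.set_finite B (restrict_indep_iff.1 hB.indep).1.subset_ground
    calc J.ncard ≤ B.ncard := ncard_le_ncard hJB hBfin
      _ = I.ncard := hB.ncard_eq_ncard_of_isBase (isBase_restrict_iff'.2 hI)
  have : sSup (Set.ncard '' {I | M.Indep I ∧ I ⊆ X}) = I.ncard :=
    le_antisymm (csSup_le (r_set_nonempty M X) hub)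
      (le_csSup (r_set_bdd M X) ⟨I, ⟨hI.indep, hI.subset⟩, rfl⟩)
  simp [r, this]

lemma r_eq_of_basis [M.Finite] (hI : M.IsBasis I X) : r M X = (I.ncard : ℤ) :=
  r_eq_of_basis' hI.isBasis'

lemma r_indep [M.Finite] (hI : M.Indep I) : r M I = (I.ncard : ℤ) :=
  r_eq_of_basis hI.isBasis_self

lemma r_ground_base [M.Finite] (hB : M.IsBase B) : r M M.E = (B.ncard : ℤ) :=
  r_eq_of_basis hB.isBasis_ground

lemma r_nonneg (M : Matroid α) [M.Finite] (X : Set α) : 0 ≤ r M X := by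
  have := le_r M.empty_indep (empty_subset X)
  simpa using this

lemma r_mono (M : Matroid α) [M.Finite] (h : X ⊆ Y) : r M X ≤ r M Y := by
  obtain ⟨I, hI⟩ := M.exists_isBasis' X
  rw [r_eq_of_basis' hI]
  exact le_r hI.indep (hI.subset.trans h)

lemma r_le_ncard [M.Finite] (hX : X.Finite) : r M X ≤ (X.ncard : ℤ) := by
  obtain ⟨I, hI⟩ := M.exists_isBasis' X
  rw [r_eq_of_basis' hI]
  exact_mod_cast ncard_le_ncard hI.subset hX

lemma r_insert_le (M : Matroid α) [M.Finite] (x : α) (X : Set α) :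
    r M (insert x X) ≤ r M X + 1 := by
  obtain ⟨I, hI⟩ := M.exists_isBasis' (insert x X)
  rw [r_eq_of_basis' hI]
  have hIfin : I.Finite := M.set_finite I hI.indep.subset_ground
  have h1 : I \ {x} ⊆ X := by
    rintro a ⟨haI, hax⟩
    rcases hI.subset haI with h | h
    · exact absurd h hax
    · exact h
  have h2 : ((I \ {x}).ncard : ℤ) ≤ r M X := le_r (hI.indep.diff _) h1
  have h3 : I.ncard ≤ (I \ {x}).ncard + 1 := by
    calc I.ncard ≤ (insert x (I \ {x})).ncard :=
          ncard_le_ncard (subset_insert_diff_singleton x I) ((hIfin.diff).insert x)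
      _ ≤ (I \ {x}).ncard + 1 := ncard_insert_le _ _
  have := (Nat.cast_le (α := ℤ)).2 h3
  push_cast at this
  linarith

lemma r_insert_closure [M.Finite] (hX : X ⊆ M.E) (hx : x ∈ M.closure X) :
    r M (insert x X) = r M X := by
  obtain ⟨I, hI⟩ := M.exists_isBasis X hX
  have hxE : x ∈ M.E := mem_ground_of_mem_closure hx
  have hIcl : M.closure I = M.closure X := hI.closure_eq_closure
  have hI2 : M.IsBasis I (insert x X) := by
    refine hI.indep.isBasis_of_subset_of_subset_closure (hI.subset.trans (subset_insert _ _)) ?_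
    rw [hIcl]
    exact insert_subset hx (M.subset_closure X hX)
  rw [r_eq_of_basis hI2, r_eq_of_basis hI]

lemma r_insert_of_not_closure [M.Finite] (hX : X ⊆ M.E) (hxE : x ∈ M.E)
    (hx : x ∉ M.closure X) : r M (insert x X) = r M X + 1 := by
  obtain ⟨I, hI⟩ := M.exists_isBasis X hX
  have hIcl : M.closure I = M.closure X := hI.closure_eq_closure
  have hxI : x ∉ I := fun h => hx (hIcl ▸ M.subset_closure I hI.indep.subset_ground h)
  have hind : M.Indep (insert x I) :=
    insert_indep_iff.2 ⟨hI.indep, fun _ => ⟨hxE, hIcl ▸ hx⟩⟩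
  have hle : ((insert x I).ncard : ℤ) ≤ r M (insert x X) :=
    le_r hind (insert_subset_insert hI.subset)
  have hIfin : I.Finite := M.set_finite I hI.indep.subset_ground
  rw [ncard_insert_of_notMem hxI hIfin] at hle
  have h2 := r_insert_le M x X
  rw [r_eq_of_basis hI] at *
  push_cast at hle
  linarith

lemma r_add_r_compl [M.Finite] (hX : X ⊆ M.E) : r M M.E ≤ r M X + r M (M.E \ X) := by
  obtain ⟨I, hI⟩ := M.exists_isBasis X hX
  obtain ⟨B, hB, hIB⟩ := hI.indep.exists_isBase_superset
  have hBfin : B.Finite := M.set_finite B hB.subset_ground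
  have hIeq : I = B ∩ X :=
    hI.eq_of_subset_indep (hB.indep.inter_right X) (subset_inter hIB hI.subset)
      inter_subset_right
  have hd : B \ X ⊆ M.E \ X := diff_subset_diff_left hB.subset_ground
  have h1 : ((B \ X).ncard : ℤ) ≤ r M (M.E \ X) := le_r (hB.indep.diff X) hd
  have hcard : (B ∩ X).ncard + (B \ X).ncard = B.ncard :=
    ncard_inter_add_ncard_diff_eq_ncard B X hBfin
  rw [r_ground_base hB, r_eq_of_basis hI, hIeq]
  have : ((B ∩ X).ncard : ℤ) + ((B \ X).ncard : ℤ) = (B.ncard : ℤ) := by exact_mod_cast hcard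
  linarith

end Rank
section Circ

variable {M : Matroid α} {I J B X Y Z S C D Q : Set α} {x q e y : α}

lemma Circuit.diff_singleton_indep (hC : Circuit M C) (he : e ∈ C) : M.Indep (C \ {e}) :=
  hC.2.2 _ (Set.sdiff_singleton_ssubset.2 he)

lemma Circuit.mem_closure_diff (hC : Circuit M C) (he : e ∈ C) :
    e ∈ M.closure (C \ {e}) := by
  have hind := hC.diff_singleton_indep he
  rw [hind.mem_closure_iff]
  left
  rw [insert_diff_singleton, insert_eq_of_mem he]
  exact ⟨hC.2.1, hC.1⟩

lemma Circuit.nonempty (hC : Circuit M C) : C.Nonempty := by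
  rcases eq_empty_or_nonempty C with h | h
  · exact absurd (h ▸ M.empty_indep) hC.2.1
  · exact h

lemma exists_circuit_subset_aux (M : Matroid α) [M.Finite] :
    ∀ n (D : Set α), D.ncard ≤ n → D ⊆ M.E → ¬ M.Indep D → ∃ C, C ⊆ D ∧ Circuit M C := by
  intro n
  induction n with
  | zero =>
    intro D hD hDE hdep
    have hfin : D.Finite := M.set_finite D hDE
    rw [Nat.le_zero, ncard_eq_zero hfin] at hD
    exact absurd (hD ▸ M.empty_indep) hdep
  | succ n ih =>
    intro D hD hDE hdep
    have hfin : D.Finite := M.set_finite D hDE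
    by_cases h : ∀ D', D' ⊂ D → M.Indep D'
    · exact ⟨D, subset_rfl, hDE, hdep, h⟩
    · push_neg at h
      obtain ⟨D', hss, hdep'⟩ := h
      obtain ⟨C, hCD, hC⟩ := ih D' (by have := ncard_lt_ncard hss hfin; omega)
        (hss.subset.trans hDE) hdep'
      exact ⟨C, hCD.trans hss.subset, hC⟩

lemma exists_circuit_subset [M.Finite] (hDE : D ⊆ M.E) (hdep : ¬ M.Indep D) :
    ∃ C, C ⊆ D ∧ Circuit M C :=
  exists_circuit_subset_aux M D.ncard D le_rfl hDE hdep

lemma Cocircuit.subset_ground (hC : Cocircuit M C) : C ⊆ M.E := hC.1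

lemma Cocircuit.no_disjoint_base (hC : Cocircuit M C) (hB : M.IsBase B) : ¬ Disjoint C B :=
  fun h => hC.2.1 (dual_indep_iff_exists'.2 ⟨hC.1, B, hB, h⟩)

lemma Cocircuit.not_mem_closure_compl [M.Finite] (hC : Cocircuit M C) (hq : q ∈ C) :
    q ∉ M.closure (M.E \ C) := by
  intro hqcl
  have hCE : C ⊆ M.E := hC.1
  have hdind : M✶.Indep (C \ {q}) := hC.2.2 _ (Set.sdiff_singleton_ssubset.2 hq)
  obtain ⟨-, B, hB, hdisj⟩ := dual_indep_iff_exists'.1 hdind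
  have hBfin : B.Finite := M.set_finite B hB.subset_ground
  have hqB : q ∈ B := by
    by_contra hqB
    refine hC.no_disjoint_base hB (disjoint_left.2 fun a haC haB => ?_)
    rcases eq_or_ne a q with rfl | hne
    · exact hqB haB
    · exact disjoint_left.1 hdisj ⟨haC, hne⟩ haB
  have hsub : M.E \ C ⊆ M.closure (B \ {q}) := by
    intro z hz
    by_contra hzcl
    by_cases hzB : z ∈ B \ {q}
    · exact hzcl (M.subset_closure _ ((diff_subset).trans hB.subset_ground) hzB)
    have hzq : z ≠ q := fun h => hz.2 (h ▸ hq)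
    have hznB : z ∉ B := fun h => hzB ⟨h, hzq⟩
    have hind : M.Indep (insert z (B \ {q})) :=
      insert_indep_iff.2 ⟨hB.indep.diff _, fun _ => ⟨hz.1, hzcl⟩⟩
    obtain ⟨B', hB', hsub'⟩ := hind.exists_isBase_superset
    have hB'fin : B'.Finite := M.set_finite B' hB'.subset_ground
    have hc1 : (insert z (B \ {q})).ncard = B.ncard := by
      rw [ncard_insert_of_notMem (fun h => hznB h.1) (hBfin.diff)]
      have := ncard_diff_singleton_add_one hqB hBfin
      omega
    have hc2 : B'.ncard ≤ (insert z (B \ {q})).ncard := by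
      rw [hc1, hB'.ncard_eq_ncard_of_isBase hB]
    have hBeq : insert z (B \ {q}) = B' := eq_of_subset_of_ncard_le hsub' hc2 hB'fin
    refine hC.no_disjoint_base hB' (disjoint_left.2 fun a haC haB' => ?_)
    rw [← hBeq] at haB'
    rcases haB' with rfl | haB'
    · exact hz.2 haC
    · rcases eq_or_ne a q with rfl | hne
      · exact haB'.2 rfl
      · exact disjoint_left.1 hdisj ⟨haC, hne⟩ haB'.1
  have h1 : q ∈ M.closure (B \ {q}) :=
    closure_subset_closure_of_subset_closure hsub (M.closure_closure _ ▸ hqcl)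
  exact (indep_iff_forall_notMem_closure_diff hB.subset_ground).1 hB.indep hqB h1

lemma Cocircuit.r_compl_lt [M.Finite] (hC : Cocircuit M C) :
    r M (M.E \ C) + 1 ≤ r M M.E := by
  obtain ⟨I, hI⟩ := M.exists_isBasis (M.E \ C) diff_subset
  obtain ⟨B, hB, hIB⟩ := hI.indep.exists_isBase_superset
  have hBfin : B.Finite := M.set_finite B hB.subset_ground
  have hne : I ≠ B := by
    rintro rfl
    exact hC.no_disjoint_base hB
      (disjoint_left.2 fun a haC haB => (hI.subset haB).2 haC)
  have hlt : I.ncard < B.ncard := ncard_lt_ncard (ssubset_of_ne_of_subset hne hIB) hBfin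
  rw [r_eq_of_basis hI, r_ground_base hB]
  exact_mod_cast hlt

end Circ
section Glue

variable {M : Matroid α} {I J B X Y Z W S C D Q R : Set α} {x q e y : α}

lemma r_restrict (M : Matroid α) (hZR : Z ⊆ R) : r (M ↾ R) Z = r M Z := by
  have hset : {I | (M ↾ R).Indep I ∧ I ⊆ Z} = {I | M.Indep I ∧ I ⊆ Z} := by
    ext I
    simp only [mem_setOf_eq, restrict_indep_iff]
    exact ⟨fun ⟨⟨h1, _⟩, h3⟩ => ⟨h1, h3⟩, fun ⟨h1, h3⟩ => ⟨⟨h1, h3.trans hZR⟩, h3⟩⟩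
  unfold r
  rw [hset]

lemma Del_ground (M : Matroid α) (D : Set α) : (Del M D).E = M.E \ D := rfl

lemma lam_del (M : Matroid α) {e : α} (hZ : Z ⊆ M.E \ {e}) :
    lam (Del M {e}) Z = r M Z + r M ((M.E \ {e}) \ Z) - r M (M.E \ {e}) := by
  unfold lam Del
  rw [restrict_ground_eq, r_restrict M hZ, r_restrict M diff_subset,
    r_restrict M subset_rfl]

lemma lam_nonneg (M : Matroid α) [M.Finite] (hS : S ⊆ M.E) : 0 ≤ lam M S := by
  unfold lam
  linarith [r_add_r_compl hS]

lemma sep01 [M.Finite] (hM : ThreeConnected M) (hS : S ⊆ M.E) (hl : lam M S ≤ 1)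
    (h2 : 2 ≤ S.ncard) (h2' : 2 ≤ (M.E \ S).ncard) : False := by
  have h0 := lam_nonneg M hS
  have hc : (2 : ℤ) ≤ S.ncard := by exact_mod_cast h2
  have hc' : (2 : ℤ) ≤ (M.E \ S).ncard := by exact_mod_cast h2'
  rcases (by omega : lam M S = 0 ∨ lam M S = 1) with h | h
  · exact hM 1 one_pos (by norm_num) S hS ⟨by rw [h]; norm_num, by push_cast; linarith,
      by push_cast; linarith⟩
  · exact hM 2 two_pos (by norm_num) S hS ⟨by rw [h]; norm_num, by push_cast; linarith,
      by push_cast; linarith⟩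

lemma small_cocirc [M.Finite] (hM : ThreeConnected M) (hE5 : 5 ≤ M.E.ncard)
    (hC : Cocircuit M C) (h2 : C.ncard ≤ 2) : False := by
  have hEfin := M.ground_finite
  have hCE : C ⊆ M.E := hC.1
  have hCfin : C.Finite := hEfin.subset hCE
  have hCne : C.Nonempty := hC.nonempty
  have hC1 : 1 ≤ C.ncard := (ncard_pos hCfin).2 hCne
  have hrc := hC.r_compl_lt
  obtain ⟨S, hCS, hSE, hS2⟩ : ∃ S, C ⊆ S ∧ S ⊆ M.E ∧ S.ncard = 2 := by
    rcases (by omega : C.ncard = 2 ∨ C.ncard = 1) with h | h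
    · exact ⟨C, subset_rfl, hCE, h⟩
    · have hEC : (M.E \ C).Nonempty := by
        rw [← ncard_pos (hEfin.diff), ncard_diff hCE hCfin]
        omega
      obtain ⟨w, hw⟩ := hEC
      refine ⟨insert w C, subset_insert _ _, insert_subset hw.1 hCE, ?_⟩
      rw [ncard_insert_of_notMem hw.2 hCfin, h]
  refine sep01 hM hSE ?_ hS2.ge ?_
  · have h1 : r M S ≤ 2 := by
      have := r_le_ncard (M := M) (hEfin.subset hSE)
      rw [hS2] at this
      exact_mod_cast this
    have h2 : r M (M.E \ S) ≤ r M (M.E \ C) := r_mono M (diff_subset_diff_right hCS)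
    unfold lam
    linarith
  · rw [ncard_diff hSE (hEfin.subset hSE), hS2]
    omega

lemma dep_D [M.Finite] (hM : ThreeConnected M) (hE5 : 5 ≤ M.E.ncard)
    (ht : ∀ T, Triad M T → e ∉ T) (hD : D ⊆ M.E) (hD3 : D.ncard = 3) (heD : e ∈ D)
    (hdep : ¬ M✶.Indep D) : False := by
  have hEfin := M.ground_finite
  have hDfin : D.Finite := hEfin.subset hD
  obtain ⟨C, hCD, hC⟩ := exists_circuit_subset (M := M✶) hD hdep
  have hCle : C.ncard ≤ 3 := hD3 ▸ ncard_le_ncard hCD hDfin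
  rcases (by omega : C.ncard ≤ 2 ∨ C.ncard = 3) with h | h
  · exact small_cocirc hM hE5 hC h
  · have hCeq : C = D := eq_of_subset_of_ncard_le hCD (by omega) hDfin
    exact ht C ⟨hC, h⟩ (hCeq ▸ heD)

lemma quad_card (hQ : Quad M Q) : Q.ncard = 4 := hQ.2.2

lemma quad_ground_five [M.Finite] (hQ : Quad M Q) : 5 ≤ M.E.ncard := by
  have hEfin := M.ground_finite
  have hQE : Q ⊆ M.E := hQ.1.1
  have h4 : 4 ≤ M.E.ncard := hQ.2.2 ▸ ncard_le_ncard hQE hEfin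
  rcases (by omega : M.E.ncard = 4 ∨ 5 ≤ M.E.ncard) with h | h
  · exfalso
    have hQeq : Q = M.E := eq_of_subset_of_ncard_le hQE (by rw [h, hQ.2.2]) hEfin
    have hQne : Q.Nonempty := by
      rw [← ncard_pos (hEfin.subset hQE), hQ.2.2]; norm_num
    obtain ⟨q, hq⟩ := hQne
    have hind : M.Indep (Q \ {q}) := hQ.1.diff_singleton_indep hq
    have hdind : M✶.Indep (Q \ {q}) := hQ.2.1.2.2 _ (Set.sdiff_singleton_ssubset.2 hq)
    obtain ⟨-, B, hB, hdisj⟩ := dual_indep_iff_exists'.1 hdind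
    have hBsub : B ⊆ {q} := by
      intro b hb
      have hbE : b ∈ M.E := hB.subset_ground hb
      rw [← hQeq] at hbE
      by_contra hbq
      exact disjoint_right.1 hdisj hb ⟨hbE, hbq⟩
    have hB1 : B.ncard ≤ 1 := le_trans (ncard_le_ncard hBsub (finite_singleton q))
      (by simp)
    obtain ⟨B₂, hB₂, hsub⟩ := hind.exists_isBase_superset
    have h3 : (Q \ {q}).ncard = 3 := by
      have := ncard_diff_singleton_add_one hq (hEfin.subset hQE)
      rw [hQ.2.2] at this
      omega
    have := ncard_le_ncard hsub (M.set_finite B₂ hB₂.subset_ground)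
    rw [h3, hB₂.ncard_eq_ncard_of_isBase hB] at this
    omega
  · exact h

end Glue
section Cases

variable {M : Matroid α} {I J B X Y Z W S C D Q R : Set α} {x q e y : α}

lemma diff_insert_eq {E S : Set α} {e : α} (hS : S ⊆ E \ {e}) :
    E \ insert e S = (E \ {e}) \ S := by
  rw [← union_singleton, union_comm, ← diff_diff]

lemma diff_eq_insert_compl {E S : Set α} {e : α} (he : e ∈ E) (hS : S ⊆ E \ {e}) :
    E \ S = insert e ((E \ {e}) \ S) := by
  have heS : e ∉ S := fun h => (hS h).2 rfl
  ext a
  simp only [mem_diff, mem_insert_iff, mem_singleton_iff]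
  constructor
  · rintro ⟨haE, haS⟩
    rcases eq_or_ne a e with rfl | hne
    · exact Or.inl rfl
    · exact Or.inr ⟨⟨haE, hne⟩, haS⟩
  · rintro (rfl | ⟨⟨h1, _⟩, h3⟩)
    · exact ⟨he, heS⟩
    · exact ⟨h1, h3⟩

lemma two_case [M.Finite] (hM : ThreeConnected M) (hE5 : 5 ≤ M.E.ncard)
    (ht : ∀ T, Triad M T → e ∉ T) (heE : e ∈ M.E) (hS : S ⊆ M.E \ {e})
    (hS2 : S.ncard = 2)
    (hl : r M S + r M ((M.E \ {e}) \ S) - r M (M.E \ {e}) = 1)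
    (hrE : r M (M.E \ {e}) = r M M.E) : False := by
  have hEfin := M.ground_finite
  set T := (M.E \ {e}) \ S with hT
  have hSE : S ⊆ M.E := hS.trans diff_subset
  have hSfin : S.Finite := hEfin.subset hSE
  have heS : e ∉ S := fun h => (hS h).2 rfl
  have hTE' : T ⊆ M.E \ {e} := diff_subset
  have hrS2 : r M S ≤ 2 := by
    have := r_le_ncard (M := M) hSfin
    rw [hS2] at this
    exact_mod_cast this
  have hrT_le : r M T ≤ r M (M.E \ {e}) := r_mono M hTE'
  have hcomplS : M.E \ S = insert e T := diff_eq_insert_compl heE hS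
  have hcompl2 : 2 ≤ (M.E \ S).ncard := by
    rw [ncard_diff hSE hSfin, hS2]
    omega
  rcases le_or_gt (r M S) 1 with h1 | h1
  · have hrT : r M T = r M (M.E \ {e}) := le_antisymm hrT_le (by linarith)
    have hrins : r M (insert e T) = r M M.E := by
      refine le_antisymm (r_mono M ?_) ?_
      · exact insert_subset heE (hTE'.trans diff_subset)
      · calc r M M.E = r M T := by rw [hrT, hrE]
          _ ≤ r M (insert e T) := r_mono M (subset_insert _ _)
    refine sep01 hM hSE ?_ hS2.ge hcompl2
    unfold lam
    rw [hcomplS, hrins]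
    linarith
  · have hrS : r M S = 2 := le_antisymm hrS2 h1
    have hrT2 : r M T = r M (M.E \ {e}) - 1 := by linarith
    set D := insert e S with hD
    have hDE : D ⊆ M.E := insert_subset heE hSE
    have hD3 : D.ncard = 3 := by
      rw [hD, ncard_insert_of_notMem heS hSfin, hS2]
    have hcomplD : M.E \ D = T := diff_insert_eq hS
    have hdep : ¬ M✶.Indep D := by
      intro hind
      obtain ⟨-, B, hB, hdisj⟩ := dual_indep_iff_exists'.1 hind
      have hBT : B ⊆ T := by
        intro b hb
        rw [← hcomplD]
        exact ⟨hB.subset_ground hb, fun h => disjoint_right.1 hdisj hb h⟩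
      have h2 := le_r hB.indep hBT
      rw [← r_ground_base hB] at h2
      linarith
    exact dep_D hM hE5 ht hDE hD3 (mem_insert e S) hdep

lemma main_move [M.Finite] (hM : ThreeConnected M) (hQuad : Quad M Q) (heQ : e ∈ Q)
    (hZ : Z ⊆ M.E \ {e}) (hW : W = (M.E \ {e}) \ Z)
    (hl : r M Z + r M W - r M (M.E \ {e}) = 1)
    (hZ2 : 2 ≤ Z.ncard) (hW3 : 3 ≤ W.ncard)
    (hQW : (Q \ {e}) ∩ W = {y})
    (hrE : r M (M.E \ {e}) = r M M.E) : False := by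
  have hEfin := M.ground_finite
  have hQE : Q ⊆ M.E := hQuad.1.1
  have heE : e ∈ M.E := hQE heQ
  have hZE : Z ⊆ M.E := hZ.trans diff_subset
  have hWE' : W ⊆ M.E \ {e} := hW ▸ diff_subset
  have hWE : W ⊆ M.E := hWE'.trans diff_subset
  have hWfin : W.Finite := hEfin.subset hWE
  have hyW : y ∈ W := by
    have : y ∈ (Q \ {e}) ∩ W := hQW ▸ rfl
    exact this.2
  have hyQ : y ∈ Q := by
    have : y ∈ (Q \ {e}) ∩ W := hQW ▸ rfl
    exact this.1.1
  have hyE : y ∈ M.E := hQE hyQ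
  have hQZy : Q \ {e} ⊆ insert y Z := by
    intro a ha
    have haE' : a ∈ M.E \ {e} := ⟨hQE ha.1, ha.2⟩
    by_cases haZ : a ∈ Z
    · exact Or.inr haZ
    · have haW : a ∈ W := by rw [hW]; exact ⟨haE', haZ⟩
      have : a ∈ (Q \ {e}) ∩ W := ⟨ha, haW⟩
      rw [hQW] at this
      exact Or.inl this
  have hWyQ : W \ {y} ⊆ M.E \ Q := by
    rintro a ⟨haW, hay⟩
    refine ⟨hWE haW, fun haQ => ?_⟩
    have : a ∈ (Q \ {e}) ∩ W := ⟨⟨haQ, (hWE' haW).2⟩, haW⟩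
    rw [hQW] at this
    exact hay this
  have hynotcl : y ∉ M.closure (W \ {y}) := by
    intro h
    exact hQuad.2.1.not_mem_closure_compl hyQ (M.closure_subset_closure hWyQ h)
  have hrW : r M W = r M (W \ {y}) + 1 := by
    have := r_insert_of_not_closure ((diff_subset).trans hWE) hyE hynotcl
    rwa [insert_diff_singleton, insert_eq_of_mem hyW] at this
  have hecl : e ∈ M.closure (insert y Z) :=
    M.closure_subset_closure hQZy (hQuad.1.mem_closure_diff heQ)
  set S := insert e (insert y Z) with hSdef
  have hyZE : insert y Z ⊆ M.E := insert_subset hyE hZE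
  have hrS : r M S = r M (insert y Z) := r_insert_closure hyZE hecl
  have hr_yZ : r M (insert y Z) ≤ r M Z + 1 := r_insert_le M y Z
  have hES : M.E \ S = W \ {y} := by
    rw [hSdef, diff_insert_eq (insert_subset ⟨hyE, fun h => ?_⟩ hZ), hW,
      ← union_singleton (s := Z), union_comm, ← diff_diff, diff_diff_comm]
    · exact ((hWE' hyW).2 : y ≠ e) (by exact h)
  have hSE : S ⊆ M.E := insert_subset heE hyZE
  have hSfin : S.Finite := hEfin.subset hSE
  refine sep01 hM hSE ?_ ?_ ?_
  · unfold lam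
    rw [hES, hrS]
    linarith
  · calc 2 ≤ Z.ncard := hZ2
      _ ≤ S.ncard := ncard_le_ncard ((subset_insert _ _).trans (subset_insert _ _)) hSfin
  · rw [hES]
    have := ncard_diff_singleton_add_one hyW hWfin
    omega

lemma k1_case [M.Finite] (hM : ThreeConnected M) (hE5 : 5 ≤ M.E.ncard) (heE : e ∈ M.E)
    (hZ : Z ⊆ M.E \ {e}) (hW : W = (M.E \ {e}) \ Z)
    (hl : r M Z + r M W - r M (M.E \ {e}) = 0)
    (hZ1 : 1 ≤ Z.ncard) (hW1 : 1 ≤ W.ncard)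
    (hrE : r M (M.E \ {e}) = r M M.E) : False := by
  have hEfin := M.ground_finite
  have hZE : Z ⊆ M.E := hZ.trans diff_subset
  have hZfin : Z.Finite := hEfin.subset hZE
  have hWE' : W ⊆ M.E \ {e} := hW ▸ diff_subset
  have hWE : W ⊆ M.E := hWE'.trans diff_subset
  have hWfin : W.Finite := hEfin.subset hWE
  have heZ : e ∉ Z := fun h => (hZ h).2 rfl
  have hE'card : (M.E \ {e}).ncard = M.E.ncard - 1 := by
    have := ncard_diff_singleton_add_one heE hEfin
    omega
  have hcards : Z.ncard + W.ncard = (M.E \ {e}).ncard := by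
    rw [hW, ncard_diff hZ (hEfin.subset hZE)]
    have := ncard_le_ncard hZ (hEfin.diff)
    omega
  rcases le_or_gt 2 W.ncard with h2 | h2
  · have hcompl : M.E \ insert e Z = W := by rw [diff_insert_eq hZ, hW]
    refine sep01 hM (insert_subset heE hZE) ?_ ?_ ?_
    · unfold lam
      rw [hcompl]
      have := r_insert_le M e Z
      linarith
    · rw [ncard_insert_of_notMem heZ hZfin]
      omega
    · rw [hcompl]
      exact h2
  · have hW1' : W.ncard = 1 := by omega
    have hcompl : M.E \ Z = insert e W := by
      rw [diff_eq_insert_compl heE hZ, hW]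
    refine sep01 hM hZE ?_ ?_ ?_
    · unfold lam
      rw [hcompl]
      have := r_insert_le M e W
      linarith
    · omega
    · rw [hcompl]
      have heW : e ∉ W := fun h => (hWE' h).2 rfl
      rw [ncard_insert_of_notMem heW hWfin]
      omega

end Cases
/-- If `Q` is a quad of a 3-connected matroid `M` and `e ∈ Q` is in no triad,
then `M \ e` is 3-connected. -/
theorem stmt10 (M : Matroid α) [M.Finite] (hM : ThreeConnected M)
    {Q : Set α} (hQ : Quad M Q) {e : α} (he : e ∈ Q)
    (ht : ∀ T, Triad M T → e ∉ T) :
    ThreeConnected (Del M {e}) := by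
  have hEfin := M.ground_finite
  have hQE : Q ⊆ M.E := hQ.1.1
  have heE : e ∈ M.E := hQE he
  have hE5 : 5 ≤ M.E.ncard := quad_ground_five hQ
  have hecl : e ∈ M.closure (M.E \ {e}) :=
    M.closure_subset_closure (diff_subset_diff_left hQE) (hQ.1.mem_closure_diff he)
  have hrE : r M (M.E \ {e}) = r M M.E := by
    have h := r_insert_closure (M := M) diff_subset hecl
    rw [insert_diff_singleton, insert_eq_of_mem heE] at h
    exact h.symm
  intro k hk0 hk3 X hX
  rintro ⟨hlam, hc1, hc2⟩
  have hXE' : X ⊆ M.E \ {e} := by rwa [Del_ground] at hX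
  have hXE : X ⊆ M.E := hXE'.trans diff_subset
  set Y := (M.E \ {e}) \ X with hYdef
  have hYX : (M.E \ {e}) \ Y = X := diff_diff_cancel_left hXE'
  have hYE' : Y ⊆ M.E \ {e} := diff_subset
  have hYE : Y ⊆ M.E := hYE'.trans diff_subset
  rw [lam_del M hXE'] at hlam
  rw [Del_ground] at hc2
  have hc2' : (k : ℤ) ≤ (Y.ncard : ℤ) := hc2
  have hXfin : X.Finite := hEfin.subset hXE
  have hYfin : Y.Finite := hEfin.subset hYE
  interval_cases k
  · -- k = 1
    have h1 : 1 ≤ X.ncard := by exact_mod_cast hc1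
    have h2 : 1 ≤ Y.ncard := by exact_mod_cast hc2'
    exact k1_case hM hE5 heE hXE' rfl (by push_cast at hlam; linarith) h1 h2 hrE
  · -- k = 2
    have h1 : 2 ≤ X.ncard := by exact_mod_cast hc1
    have h2 : 2 ≤ Y.ncard := by exact_mod_cast hc2'
    have hlam2 : r M X + r M Y - r M (M.E \ {e}) = 1 := by push_cast at hlam; linarith
    by_cases hclX : e ∈ M.closure X
    · have hcompl : M.E \ insert e X = Y := by rw [diff_insert_eq hXE']
      refine sep01 hM (insert_subset heE hXE) ?_ ?_ ?_
      · unfold lam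
        rw [hcompl, r_insert_closure hXE hclX]
        linarith
      · exact le_trans h1 (ncard_le_ncard (subset_insert _ _) (hXfin.insert e))
      · rw [hcompl]; exact h2
    by_cases hclY : e ∈ M.closure Y
    · have hcompl : M.E \ X = insert e Y := diff_eq_insert_compl heE hXE'
      refine sep01 hM hXE ?_ h1 ?_
      · unfold lam
        rw [hcompl, r_insert_closure hYE hclY]
        linarith
      · rw [hcompl]
        exact le_trans h2 (ncard_le_ncard (subset_insert _ _) (hYfin.insert e))
    -- e in closure of neither side
    have hQcl := hQ.1.mem_closure_diff he
    have hQsub : Q \ {e} ⊆ M.E \ {e} := diff_subset_diff_left hQE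
    have hQnX : ¬ Q \ {e} ⊆ X := fun h => hclX (M.closure_subset_closure h hQcl)
    have hQnY : ¬ Q \ {e} ⊆ Y := fun h => hclY (M.closure_subset_closure h hQcl)
    set A := (Q \ {e}) ∩ X with hAdef
    set B := (Q \ {e}) ∩ Y with hBdef
    have hQfin : (Q \ {e}).Finite := hEfin.subset (hQsub.trans diff_subset)
    have hsplit : ∀ a ∈ Q \ {e}, a ∈ X ∨ a ∈ Y := by
      intro a ha
      by_cases haX : a ∈ X
      · exact Or.inl haX
      · exact Or.inr ⟨hQsub ha, haX⟩
    have hABunion : A ∪ B = Q \ {e} := by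
      apply subset_antisymm (union_subset inter_subset_left inter_subset_left)
      intro a ha
      rcases hsplit a ha with h | h
      · exact Or.inl ⟨ha, h⟩
      · exact Or.inr ⟨ha, h⟩
    have hABdisj : Disjoint A B :=
      Disjoint.mono inter_subset_right inter_subset_right disjoint_sdiff_right
    have hQ3 : (Q \ {e}).ncard = 3 := by
      have := ncard_diff_singleton_add_one he (hEfin.subset hQE)
      rw [hQ.2.2] at this
      omega
    have hAB : A.ncard + B.ncard = 3 := by
      rw [← ncard_union_eq hABdisj (hQfin.subset inter_subset_left)
        (hQfin.subset inter_subset_left), hABunion, hQ3]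
    have hAne : A.Nonempty := by
      rw [nonempty_iff_ne_empty]
      intro hA0
      refine hQnY fun a ha => ?_
      rcases hsplit a ha with h | h
      · exact absurd (hAdef ▸ ⟨ha, h⟩ : a ∈ A) (hA0 ▸ notMem_empty a)
      · exact h
    have hBne : B.Nonempty := by
      rw [nonempty_iff_ne_empty]
      intro hB0
      refine hQnX fun a ha => ?_
      rcases hsplit a ha with h | h
      · exact h
      · exact absurd (hBdef ▸ ⟨ha, h⟩ : a ∈ B) (hB0 ▸ notMem_empty a)
    have hA1 : 1 ≤ A.ncard := (ncard_pos (hQfin.subset inter_subset_left)).2 hAne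
    have hB1 : 1 ≤ B.ncard := (ncard_pos (hQfin.subset inter_subset_left)).2 hBne
    rcases (by omega : B.ncard = 1 ∨ A.ncard = 1) with hcard1 | hcard1
    · obtain ⟨y, hy⟩ := ncard_eq_one.1 hcard1
      rcases le_or_gt 3 Y.ncard with h3 | h3
      · exact main_move hM hQ he hXE' rfl hlam2 h1 h3 (hBdef ▸ hy) hrE
      · have hY2 : Y.ncard = 2 := by omega
        refine two_case hM hE5 ht heE hYE' hY2 ?_ hrE
        rw [hYX]
        linarith
    · obtain ⟨x, hx⟩ := ncard_eq_one.1 hcard1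
      rcases le_or_gt 3 X.ncard with h3 | h3
      · exact main_move hM hQ he hYE' hYX.symm (by linarith) h2 h3 (hAdef ▸ hx) hrE
      · have hX2 : X.ncard = 2 := by omega
        exact two_case hM hE5 ht heE hXE' hX2 hlam2 hrE
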